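/- Let B be a real symmetric positive definite d×d matrix, let L > 0 be such that ⟨x, Bx⟩ ≤ L·‖x‖² for all x ∈ ℝ^d, let α ∈ (0, 2/L), and let β ∈ [0, 1). Then the d²×d² matrix I_d ⊗ B + B ⊗ I_d − α(1−β)²·(B ⊗ B) is symmetric positive definite; in particular it is invertible. -/

import Mathlib

open Matrix Kronecker
open scoped RealInnerProductSpace

/-- Congruence by an invertible matrix preserves positive definiteness. -/
lemma posDef_conj_aux {n : Type*} [Fintype n] [DecidableEq n] {D N : Matrix n n ℝ}
    (hD : D.PosDef) (hN : IsUnit N) : (N * D * Nᴴ).PosDef := by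
  have hNH : IsUnit Nᴴ := by
    have := hN.invertible
    have := Matrix.invertibleConjTranspose (A := N)
    exact isUnit_of_invertible _
  have hrw : N * D * Nᴴ = Nᴴᴴ * D * Nᴴ := by rw [conjTranspose_conjTranspose]
  rw [hrw]
  refine Matrix.posDef_iff_dotProduct_mulVec.mpr ⟨Matrix.isHermitian_conjTranspose_mul_mul Nᴴ hD.1, fun x hx => ?_⟩
  have hy : Nᴴ *ᵥ x ≠ 0 := by
    intro h
    apply hx
    have h0 : Nᴴ *ᵥ x = Nᴴ *ᵥ 0 := by simpa using h
    exact (Matrix.mulVec_injective_iff_isUnit.mpr hNH) h0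
  simpa only [star_mulVec, dotProduct_mulVec, vecMul_vecMul] using hD.dotProduct_mulVec_pos hy

/-- If `B` is symmetric positive definite with `⟨x, Bx⟩ ≤ L ‖x‖²`, `0 < α < 2/L` and
`β ∈ [0,1)`, then `I ⊗ B + B ⊗ I - α(1-β)² (B ⊗ B)` is (symmetric) positive definite;
in particular it is invertible. -/
theorem stmt7 {d : ℕ} (B : Matrix (Fin d) (Fin d) ℝ) (hB : B.PosDef) (L : ℝ) (hL : 0 < L)
    (hBL : ∀ x : EuclideanSpace ℝ (Fin d), ⟪x, Matrix.toEuclideanLin B x⟫ ≤ L * ‖x‖ ^ 2)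
    (α : ℝ) (hα : α ∈ Set.Ioo 0 (2 / L)) (β : ℝ) (hβ : β ∈ Set.Ico (0 : ℝ) 1) :
    ((1 : Matrix (Fin d) (Fin d) ℝ) ⊗ₖ B + B ⊗ₖ (1 : Matrix (Fin d) (Fin d) ℝ)
        - (α * (1 - β) ^ 2) • (B ⊗ₖ B)).PosDef ∧
      IsUnit ((1 : Matrix (Fin d) (Fin d) ℝ) ⊗ₖ B + B ⊗ₖ (1 : Matrix (Fin d) (Fin d) ℝ)
        - (α * (1 - β) ^ 2) • (B ⊗ₖ B)) := by
  obtain ⟨hα0, hα2⟩ := hα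
  obtain ⟨hβ0, hβ1⟩ := hβ
  set c : ℝ := α * (1 - β) ^ 2 with hc
  have hc0 : 0 < c := by
    rw [hc]; exact mul_pos hα0 (pow_pos (by linarith) 2)
  have hcα : c < 2 / L := by
    have h1 : (1 - β) ^ 2 ≤ 1 := by nlinarith
    calc c = α * (1 - β) ^ 2 := hc
      _ ≤ α * 1 := mul_le_mul_of_nonneg_left h1 hα0.le
      _ = α := mul_one α
      _ < 2 / L := hα2
  -- eigen data
  set lam : Fin d → ℝ := hB.1.eigenvalues with hlam
  set U : Matrix (Fin d) (Fin d) ℝ := (hB.1.eigenvectorUnitary : Matrix (Fin d) (Fin d) ℝ)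
    with hU
  have hUU : U * Uᴴ = 1 := by
    simpa [hU, Matrix.star_eq_conjTranspose] using
      Matrix.mem_unitaryGroup_iff.mp hB.1.eigenvectorUnitary.2
  have hlam_pos : ∀ i, 0 < lam i := hB.eigenvalues_pos
  have hlam_le : ∀ i, lam i ≤ L := by
    intro i
    have hx := hBL (hB.1.eigenvectorBasis i)
    have hnorm : ‖hB.1.eigenvectorBasis i‖ = 1 := hB.1.eigenvectorBasis.orthonormal.1 i
    have hev : Matrix.toEuclideanLin B (hB.1.eigenvectorBasis i)
        = lam i • hB.1.eigenvectorBasis i := by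
      apply (WithLp.equiv 2 _).symm.injective.eq_iff.mpr
      ext j
      have := congrFun (hB.1.mulVec_eigenvectorBasis i) j
      simpa [Matrix.toEuclideanLin_apply] using this
    rw [hev, real_inner_smul_right, real_inner_self_eq_norm_sq, hnorm] at hx
    simpa [hnorm] using hx
  -- eigenvalues of the kronecker combination
  set μ : Fin d × Fin d → ℝ := fun p => lam p.2 + lam p.1 - c * (lam p.1 * lam p.2) with hμ
  have hμpos : ∀ p, 0 < μ p := by
    rintro ⟨i, j⟩
    have h1 := hlam_pos i
    have h2 := hlam_pos j
    have h3 := hlam_le i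
    have h4 := hlam_le j
    have key : c * (lam i * lam j) < (2 / L) * (lam i * lam j) := by
      apply mul_lt_mul_of_pos_right hcα (by positivity)
    have key2 : (2 / L) * (lam i * lam j) ≤ lam i + lam j := by
      rw [div_mul_eq_mul_div, div_le_iff₀ hL]
      nlinarith
    simp only [hμ]
    nlinarith
  -- spectral decomposition
  have hspec : B = U * Matrix.diagonal lam * Uᴴ := by
    have := hB.1.spectral_theorem
    simpa [hU, hlam, Matrix.star_eq_conjTranspose, RCLike.ofReal_real_eq_id] using this
  set U2 : Matrix (Fin d × Fin d) (Fin d × Fin d) ℝ := U ⊗ₖ U with hU2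
  have hU2H : U2ᴴ = Uᴴ ⊗ₖ Uᴴ := by
    rw [hU2, Matrix.conjTranspose_eq_transpose_of_trivial,
      Matrix.conjTranspose_eq_transpose_of_trivial]
    exact (Matrix.kroneckerMap_transpose _ _ _).symm
  have hUU' : Uᴴ * U = 1 := by
    simpa [hU, Matrix.star_eq_conjTranspose] using
      Matrix.mem_unitaryGroup_iff'.mp hB.1.eigenvectorUnitary.2
  have hU2unit : IsUnit U2 := by
    refine ⟨⟨U2, Uᴴ ⊗ₖ Uᴴ, ?_, ?_⟩, rfl⟩
    · rw [hU2, ← Matrix.mul_kronecker_mul, hUU, Matrix.one_kronecker_one]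
    · rw [hU2, ← Matrix.mul_kronecker_mul, hUU', Matrix.one_kronecker_one]
  -- the key identity
  have hkey : (1 : Matrix (Fin d) (Fin d) ℝ) ⊗ₖ B + B ⊗ₖ (1 : Matrix (Fin d) (Fin d) ℝ)
      - c • (B ⊗ₖ B) = U2 * Matrix.diagonal μ * U2ᴴ := by
    have h1 : (1 : Matrix (Fin d) (Fin d) ℝ) = U * 1 * Uᴴ := by
      rw [Matrix.mul_one, hUU]
    have e1 : (1 : Matrix (Fin d) (Fin d) ℝ) ⊗ₖ B
        = U2 * ((1 : Matrix (Fin d) (Fin d) ℝ) ⊗ₖ Matrix.diagonal lam) * U2ᴴ := by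
      conv_lhs => rw [hspec, h1]
      rw [hU2H, hU2, ← Matrix.mul_kronecker_mul, ← Matrix.mul_kronecker_mul]
    have e2 : B ⊗ₖ (1 : Matrix (Fin d) (Fin d) ℝ)
        = U2 * (Matrix.diagonal lam ⊗ₖ (1 : Matrix (Fin d) (Fin d) ℝ)) * U2ᴴ := by
      conv_lhs => rw [hspec, h1]
      rw [hU2H, hU2, ← Matrix.mul_kronecker_mul, ← Matrix.mul_kronecker_mul]
    have e3 : B ⊗ₖ B
        = U2 * (Matrix.diagonal lam ⊗ₖ Matrix.diagonal lam) * U2ᴴ := by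
      conv_lhs => rw [hspec]
      rw [hU2H, hU2, ← Matrix.mul_kronecker_mul, ← Matrix.mul_kronecker_mul]
    have hdiag : ((1 : Matrix (Fin d) (Fin d) ℝ) ⊗ₖ Matrix.diagonal lam)
        + (Matrix.diagonal lam ⊗ₖ (1 : Matrix (Fin d) (Fin d) ℝ))
        - c • (Matrix.diagonal lam ⊗ₖ Matrix.diagonal lam) = Matrix.diagonal μ := by
      rw [← Matrix.diagonal_one, Matrix.diagonal_kronecker_diagonal,
        Matrix.diagonal_kronecker_diagonal, Matrix.diagonal_kronecker_diagonal,
        ← Matrix.diagonal_smul, Matrix.diagonal_add, Matrix.diagonal_sub]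
      funext p
      simp [hμ]
    rw [e1, e2, e3, ← hdiag]
    simp only [Matrix.add_mul, Matrix.mul_add, Matrix.sub_mul, Matrix.mul_sub,
      Matrix.smul_mul, Matrix.mul_smul]
  have hPD : ((1 : Matrix (Fin d) (Fin d) ℝ) ⊗ₖ B + B ⊗ₖ (1 : Matrix (Fin d) (Fin d) ℝ)
      - c • (B ⊗ₖ B)).PosDef := by
    rw [hkey]
    exact posDef_conj_aux (Matrix.posDef_diagonal_iff.mpr hμpos) hU2unit
  exact ⟨hPD, hPD.isUnit⟩
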